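/- Let A be a commutative ring, I a finitely generated ideal containing a non-zerodivisor, and f ∈ A. Then f is integral over I if and only if there exists a finitely generated faithful A-module M with fM ⊆ IM. -/

import Mathlib

/-- `f` is integral over the ideal `I`: there is an equation
`f^k + a₁ f^(k-1) + ⋯ + a_k = 0` with `aᵢ ∈ Iⁱ` (and `k ≥ 1`). -/
def IsIntegralOverIdeal {A : Type*} [CommRing A] (I : Ideal A) (f : A) : Prop :=
  ∃ (k : ℕ) (a : ℕ → A), 0 < k ∧ (∀ i ∈ Finset.Icc 1 k, a i ∈ I ^ i) ∧
    f ^ k + ∑ i ∈ Finset.Icc 1 k, a i * f ^ (k - i) = 0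

universe u

-- key induction lemma
lemma key_lemma {A : Type u} [CommRing A] (I F : Ideal A) (m : ℕ) :
    F * (I + F) ^ m ≤ I * (I + F) ^ m + F ^ (m + 1) := by
  induction m with
  | zero => simp
  | succ m ih =>
      calc F * (I + F) ^ (m + 1) = (F * (I + F) ^ m) * (I + F) := by ring
        _ ≤ (I * (I + F) ^ m + F ^ (m + 1)) * (I + F) := Ideal.mul_mono_left ih
        _ = I * (I + F) ^ (m + 1) + (F ^ (m + 1) * I + F ^ (m + 2)) := by ring
        _ ≤ I * (I + F) ^ (m + 1) + F ^ (m + 2) := by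
            have hY : F ^ (m + 1) * I ≤ I * (I + F) ^ (m + 1) := by
              calc F ^ (m + 1) * I = I * F ^ (m + 1) := mul_comm _ _
                _ ≤ I * (I + F) ^ (m + 1) :=
                    Ideal.mul_mono_right (pow_le_pow_left' le_sup_right _)
            exact sup_le le_sup_left (sup_le (hY.trans le_sup_left) le_sup_right)

/-- If `I` is finitely generated and contains a non-zerodivisor, then
`f` is integral over `I` iff there is a finitely generated *faithful* `A`-module `M`
with `f·M ⊆ I·M`. -/
theorem isIntegralOverIdeal_iff_exists_faithful_module {A : Type u} [CommRing A]
    (I : Ideal A) (hfg : I.FG) (hnzd : ∃ r ∈ I, r ∈ nonZeroDivisors A) (f : A) :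
    IsIntegralOverIdeal I f ↔
      ∃ (M : Type u) (_ : AddCommGroup M) (_ : Module A M),
        Module.Finite A M ∧
        (∀ m : M, f • m ∈ I • (⊤ : Submodule A M)) ∧
        (∀ a : A, (∀ m : M, a • m = 0) → a = 0) := by
  obtain ⟨r, hrI, hr⟩ := hnzd
  constructor
  · rintro ⟨k, a, hk, ha, heq⟩
    set F : Ideal A := Ideal.span {f} with hF
    set J : Ideal A := (I + F) ^ (k - 1) with hJ
    -- f^k ∈ I * J
    have hfk : f ^ k ∈ I * J := by
      have : f ^ k = -∑ i ∈ Finset.Icc 1 k, a i * f ^ (k - i) := by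
        linear_combination heq
      rw [this]
      refine neg_mem (Submodule.sum_mem _ fun i hi => ?_)
      obtain ⟨hi1, hik⟩ := Finset.mem_Icc.mp hi
      have h1 : a i * f ^ (k - i) ∈ I ^ i * F ^ (k - i) :=
        Ideal.mul_mem_mul (ha i hi)
          (Ideal.pow_mem_pow (Ideal.mem_span_singleton_self f) _)
      have h2 : I ^ i * F ^ (k - i) ≤ I * J := by
        have : I ^ i * F ^ (k - i) = I * (I ^ (i - 1) * F ^ (k - i)) := by
          rw [← mul_assoc, ← pow_succ']
          congr 2
          omega
        rw [this]
        refine Ideal.mul_mono_right ?_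
        calc I ^ (i - 1) * F ^ (k - i)
            ≤ (I + F) ^ (i - 1) * (I + F) ^ (k - i) :=
              Ideal.mul_mono (pow_le_pow_left' le_sup_left _)
                (pow_le_pow_left' le_sup_right _)
          _ = (I + F) ^ (k - 1) := by rw [← pow_add]; congr 1; omega
      exact h2 h1
    have hmain : F * J ≤ I * J := by
      refine (key_lemma I F (k - 1)).trans (sup_le le_rfl ?_)
      have hk1 : k - 1 + 1 = k := by omega
      rw [hk1, hF, Ideal.span_singleton_pow, Ideal.span_le, Set.singleton_subset_iff]
      exact hfk
    have hJfg : J.FG := by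
      have : (I ⊔ F).FG := Submodule.FG.sup hfg (Submodule.fg_span_singleton f)
      exact Submodule.FG.pow this _
    refine ⟨↥J, inferInstance, inferInstance, (Module.Finite.iff_fg).mpr hJfg, ?_, ?_⟩
    · intro m
      rw [Submodule.mem_smul_top_iff]
      have : ((f • m : J) : A) = f * (m : A) := rfl
      rw [this, Ideal.smul_eq_mul]
      exact hmain (Ideal.mul_mem_mul (Ideal.mem_span_singleton_self f) m.2)
    · intro b hb
      have hrJ : r ^ (k - 1) ∈ J := by
        rw [hJ]
        exact (pow_le_pow_left' (le_sup_left : I ≤ I + F) _) (Ideal.pow_mem_pow hrI _)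
      have := hb ⟨r ^ (k - 1), hrJ⟩
      have h0 : b * r ^ (k - 1) = 0 := by
        have := congrArg (Subtype.val) this
        simpa [Submodule.coe_smul, smul_eq_mul] using this
      exact mem_nonZeroDivisors_iff_right.mp (pow_mem hr (k - 1)) b h0
  · rintro ⟨M, _, _, hfin, hsub, hfaith⟩
    set φ : Module.End A M := algebraMap A (Module.End A M) f with hφ
    have hrange : LinearMap.range φ ≤ I • (⊤ : Submodule A M) := by
      rintro x ⟨m, rfl⟩
      simpa [hφ, Module.algebraMap_end_apply] using hsub m
    obtain ⟨p, hmonic, -, hcoeff, haeval⟩ :=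
      LinearMap.exists_monic_and_coeff_mem_pow_and_aeval_eq_zero_of_range_le_smul A φ I hrange
    have hev : p.eval f = 0 := by
      apply hfaith
      intro m
      have : (Polynomial.aeval φ p) m = 0 := by rw [haeval]; rfl
      rwa [hφ, Polynomial.aeval_algebraMap_apply_eq_algebraMap_eval,
        Module.algebraMap_end_apply] at this
    set k := p.natDegree with hkdef
    rcases Nat.eq_zero_or_pos k with hk0 | hkpos
    · have hp1 : p = 1 := hmonic.natDegree_eq_zero.mp hk0
      rw [hp1, Polynomial.eval_one] at hev
      haveI : Subsingleton A := subsingleton_of_zero_eq_one hev.symm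
      exact ⟨1, 0, one_pos, fun i _ => by simp, Subsingleton.elim _ _⟩
    · refine ⟨k, fun i => p.coeff (k - i), hkpos, fun i hi => ?_, ?_⟩
      · obtain ⟨hi1, hik⟩ := Finset.mem_Icc.mp hi
        have := hcoeff (k - i)
        rwa [Nat.sub_sub_self hik] at this
      · have hre : ∑ j ∈ Finset.range k, p.coeff j * f ^ j =
            ∑ i ∈ Finset.Icc 1 k, p.coeff (k - i) * f ^ (k - i) := by
          refine Finset.sum_nbij' (fun j => k - j) (fun i => k - i) ?_ ?_ ?_ ?_ ?_
          · intro j hj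
            simp only [Finset.mem_range] at hj
            simp only [Finset.mem_Icc]
            omega
          · intro i hi
            simp only [Finset.mem_Icc] at hi
            simp only [Finset.mem_range]
            omega
          · intro j hj
            simp only [Finset.mem_range] at hj
            show k - (k - j) = j
            omega
          · intro i hi
            simp only [Finset.mem_Icc] at hi
            show k - (k - i) = i
            omega
          · intro j hj
            simp only [Finset.mem_range] at hj
            show p.coeff j * f ^ j = p.coeff (k - (k - j)) * f ^ (k - (k - j))
            rw [Nat.sub_sub_self (by omega : j ≤ k)]
        rw [← hev, Polynomial.eval_eq_sum_range, Finset.sum_range_succ,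
          hmonic.coeff_natDegree, one_mul, add_comm, hre]
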